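/- Let R be an antisymmetric partial applicative structure (A ⊢ B and B ⊢ A imply A = B for all A, B ⊆ R, and likewise for all relations ⊢_I). Then R satisfies property TO: for every r ∈ R, the partial function [r] : a ↦ r·a is TO. -/
import Mathlib


/-- Application lifted to partially-defined arguments: `oapp op x y` is the
value of the applicative term `x · y`, where `x`, `y` may be undefined. -/
def oapp {R : Type} (op : R → R → Option R) (x y : Option R) : Option R :=
  x.bind fun a => y.bind fun b => op a b

/-- The indexed entailment relation `φ ⊢_I ψ` on `P(R)^I` induced by a PAS. -/
def Entails {R : Type} (op : R → R → Option R) {I : Type} (φ ψ : I → Set R) : Prop :=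
  ∃ r : R, ∀ i : I, ∀ a ∈ φ i, ∃ b : R, op r a = some b ∧ b ∈ ψ i

/-- The entailment relation `A ⊢ B` on `P(R)` induced by a PAS. -/
def Entails1 {R : Type} (op : R → R → Option R) (A B : Set R) : Prop :=
  ∃ r : R, ∀ a ∈ A, ∃ b : R, op r a = some b ∧ b ∈ B

/-- `piter f n a` is the `n`-th iterate `f^n(a)` of the partial function `f` at `a`. -/
def piter {R : Type} (f : R → Option R) : ℕ → R → Option R
  | 0 => fun a => some a
  | n + 1 => fun a => (piter f n a).bind f


lemma piter_add {R : Type} (f : R → Option R) (m n : ℕ) (x : R) :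
    piter f (m + n) x = (piter f m x).bind (piter f n) := by
  induction n with
  | zero => simp [piter]
  | succ n ih =>
    show piter f (m + n + 1) x = _
    simp only [piter, ih, Option.bind_assoc]

/-- A partial function is TO if every point has finite odd order or finite divergence. -/
def TOfun {R : Type} (f : R → Option R) : Prop :=
  ∀ a : R,
    (∃ n : ℕ, (1 ≤ n ∧ piter f n a = some a ∧
        ∀ m : ℕ, 1 ≤ m → piter f m a = some a → n ≤ m) ∧ Odd n) ∨
    (∃ n : ℕ, 1 ≤ n ∧ piter f n a = none)

/-- A partial function is TL if every point is a fixed point or has finite divergence. -/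
def TLfun {R : Type} (f : R → Option R) : Prop :=
  ∀ a : R, f a = some a ∨ (∃ n : ℕ, 1 ≤ n ∧ piter f n a = none)

/-- An antisymmetric PAS satisfies property TO. -/
theorem stmt_13 {R : Type} [Nonempty R] (op : R → R → Option R)
    (hAnt1 : ∀ A B : Set R, Entails1 op A B → Entails1 op B A → A = B)
    (hAnt : ∀ (I : Type) (φ ψ : I → Set R),
      Entails op φ ψ → Entails op ψ φ → φ = ψ) :
    ∀ r : R, TOfun (fun a => op r a) := by
  classical
  intro r a
  set f : R → Option R := fun a => op r a with hf
  by_cases hdiv : ∃ n : ℕ, 1 ≤ n ∧ piter f n a = none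
  · exact Or.inr hdiv
  · left
    push_neg at hdiv
    have hdef : ∀ n : ℕ, ∃ b, piter f n a = some b := by
      intro n
      rcases Nat.eq_zero_or_pos n with h | h
      · exact ⟨a, by simp [h, piter]⟩
      · rcases Option.ne_none_iff_exists'.mp (hdiv n h) with ⟨b, hb⟩
        exact ⟨b, hb⟩
    choose g hg using hdef
    have hg0 : g 0 = a := by
      have := hg 0
      simp [piter] at this
      exact this.symm
    have hstep : ∀ n, op r (g n) = some (g (n + 1)) := by
      intro n
      have h1 := hg (n + 1)
      rw [show piter f (n+1) a = (piter f n a).bind f from rfl, hg n] at h1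
      exact h1
    set A : Set R := {x | ∃ k, g (2 * k) = x} with hA
    set B : Set R := {x | ∃ k, g (2 * k + 1) = x} with hB
    have hABe : Entails1 op A B := by
      refine ⟨r, ?_⟩
      rintro x ⟨k, rfl⟩
      exact ⟨g (2 * k + 1), hstep _, ⟨k, rfl⟩⟩
    have hBAe : Entails1 op B A := by
      refine ⟨r, ?_⟩
      rintro x ⟨k, rfl⟩
      exact ⟨g (2 * k + 1 + 1), hstep _, ⟨k + 1, by ring_nf⟩⟩
    have hEq : A = B := hAnt1 A B hABe hBAe
    have haA : a ∈ A := ⟨0, by simpa using hg0⟩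
    have haB : a ∈ B := hEq ▸ haA
    rcases haB with ⟨k, hk⟩
    have hper : piter f (2 * k + 1) a = some a := by rw [hg (2 * k + 1), hk]
    have hex : ∃ n, 1 ≤ n ∧ piter f n a = some a :=
      ⟨2 * k + 1, by omega, hper⟩
    set n := Nat.find hex with hn
    obtain ⟨hn1, hnper⟩ := Nat.find_spec hex
    have hmin : ∀ m : ℕ, 1 ≤ m → piter f m a = some a → n ≤ m := by
      intro m h1 h2
      exact Nat.find_min' hex ⟨h1, h2⟩
    refine ⟨n, ⟨hn1, hnper, hmin⟩, ?_⟩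
    have hmul : ∀ q : ℕ, piter f (n * q) a = some a := by
      intro q
      induction q with
      | zero => simp [piter]
      | succ q ih =>
        rw [Nat.mul_succ, piter_add, ih, Option.bind_some, hnper]
    have hdvd : n ∣ 2 * k + 1 := by
      have hmod : piter f ((2 * k + 1) % n) a = some a := by
        have := hper
        rw [show 2 * k + 1 = n * ((2 * k + 1) / n) + (2 * k + 1) % n from
          (Nat.div_add_mod _ _).symm] at this
        rwa [piter_add, hmul, Option.bind_some] at this
      rcases Nat.eq_zero_or_pos ((2 * k + 1) % n) with h0 | h0
      · exact Nat.dvd_of_mod_eq_zero h0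
      · have := hmin _ h0 hmod
        have hlt : (2 * k + 1) % n < n := Nat.mod_lt _ (by omega)
        omega
    rcases Nat.even_or_odd n with he | ho
    · exfalso
      have : 2 ∣ 2 * k + 1 := dvd_trans he.two_dvd hdvd
      omega
    · exact ho
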